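/- For every integer n ≥ 1 and every real t, the Toeplitz determinants satisfy D_{n+1}(t)·D_{n−1}(t)/D_n(t)² = 1 − U_n(t)². -/

import Mathlib

set_option maxHeartbeats 1000000

open MeasureTheory Matrix Filter

/-- The k-th Fourier coefficient of the symbol `f(e^{iθ}) = e^{2t cos θ}`. -/
noncomputable def fk (t : ℝ) (k : ℤ) : ℝ :=
  (1 / (2 * Real.pi)) *
    ∫ θ in (0:ℝ)..(2 * Real.pi), Real.exp (2 * t * Real.cos θ) * Real.cos ((k : ℝ) * θ)

/-- The n×n Toeplitz matrix `T_n(t)` with (j,k) entry `f_{j-k}(t)`. -/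
noncomputable def Tmat (n : ℕ) (t : ℝ) : Matrix (Fin n) (Fin n) ℝ :=
  fun j k => fk t ((j : ℤ) - (k : ℤ))

/-- The Toeplitz determinant `D_n(t)`. -/
noncomputable def Dn (n : ℕ) (t : ℝ) : ℝ := (Tmat n t).det

/-- δ⁺ = (1,0,…,0)ᵀ. -/
def deltaPlus (n : ℕ) : Fin n → ℝ := fun i => if (i : ℕ) = 0 then 1 else 0

/-- δ⁻ = (0,…,0,1)ᵀ. -/
def deltaMinus (n : ℕ) : Fin n → ℝ := fun i => if (i : ℕ) = n - 1 then 1 else 0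

/-- f⁺ = (f_1,…,f_n)ᵀ. -/
noncomputable def fplus (n : ℕ) (t : ℝ) : Fin n → ℝ := fun j => fk t ((j : ℤ) + 1)

/-- f⁻ = (f_n,…,f_1)ᵀ. -/
noncomputable def fminus (n : ℕ) (t : ℝ) : Fin n → ℝ := fun j => fk t ((n : ℤ) - (j : ℤ))

/-- U_n(t) = ⟨T_n(t)⁻¹ f⁺, δ⁻⟩. -/
noncomputable def Un (n : ℕ) (t : ℝ) : ℝ :=
  dotProduct ((Tmat n t)⁻¹ *ᵥ fplus n t) (deltaMinus n)

/-- V_n⁺(t) = ⟨T_n(t)⁻¹ δ⁺, δ⁺⟩. -/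
noncomputable def Vplus (n : ℕ) (t : ℝ) : ℝ :=
  dotProduct ((Tmat n t)⁻¹ *ᵥ deltaPlus n) (deltaPlus n)

/-- V_n⁻(t) = ⟨T_n(t)⁻¹ δ⁻, δ⁺⟩. -/
noncomputable def Vminus (n : ℕ) (t : ℝ) : ℝ :=
  dotProduct ((Tmat n t)⁻¹ *ᵥ deltaMinus n) (deltaPlus n)

lemma fk_neg (t : ℝ) (k : ℤ) : fk t (-k) = fk t k := by
  unfold fk
  congr 1
  apply intervalIntegral.integral_congr
  intro θ _
  simp [neg_mul, Real.cos_neg]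

lemma Tmat_transpose (n : ℕ) (t : ℝ) : (Tmat n t)ᵀ = Tmat n t := by
  ext i j
  simp only [Matrix.transpose_apply, Tmat]
  rw [← fk_neg t ((i:ℤ) - j)]
  ring_nf

lemma Tmat_rev (n : ℕ) (t : ℝ) (i j : Fin n) :
    Tmat n t (Fin.rev i) (Fin.rev j) = Tmat n t i j := by
  simp only [Tmat, Fin.val_rev]
  rw [← fk_neg t ((i:ℤ) - j)]
  congr 1
  have hi := i.is_lt; have hj := j.is_lt
  omega

lemma quad_form (m : ℕ) (t : ℝ) (x : Fin m → ℝ) :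
    dotProduct x (Tmat m t *ᵥ x) =
      (1 / (2 * Real.pi)) * ∫ θ in (0:ℝ)..(2*Real.pi),
        Real.exp (2*t*Real.cos θ) *
          ((∑ j, x j * Real.cos ((j:ℝ) * θ))^2 + (∑ j, x j * Real.sin ((j:ℝ) * θ))^2) := by
  have hInt : ∀ (j k : Fin m), IntervalIntegrable
      (fun θ => Real.exp (2*t*Real.cos θ) * Real.cos ((((j:ℤ) - (k:ℤ) : ℤ):ℝ) * θ) * (x j * x k))
      volume 0 (2*Real.pi) := by
    intro j k
    apply Continuous.intervalIntegrable
    fun_prop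
  have step1 : dotProduct x (Tmat m t *ᵥ x) =
      ∑ j : Fin m, ∑ k : Fin m, (1 / (2 * Real.pi)) * ∫ θ in (0:ℝ)..(2*Real.pi),
        Real.exp (2*t*Real.cos θ) * Real.cos ((((j:ℤ) - (k:ℤ) : ℤ):ℝ) * θ) * (x j * x k) := by
    simp only [dotProduct, Matrix.mulVec, Tmat, fk]
    apply Finset.sum_congr rfl; intro j _
    rw [Finset.mul_sum]
    apply Finset.sum_congr rfl; intro k _
    rw [intervalIntegral.integral_mul_const]
    ring
  rw [step1]
  have step2 : ∀ j : Fin m, (∑ k : Fin m, (1 / (2 * Real.pi)) * ∫ θ in (0:ℝ)..(2*Real.pi),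
        Real.exp (2*t*Real.cos θ) * Real.cos ((((j:ℤ) - (k:ℤ) : ℤ):ℝ) * θ) * (x j * x k))
      = (1 / (2 * Real.pi)) * ∫ θ in (0:ℝ)..(2*Real.pi), ∑ k : Fin m,
        Real.exp (2*t*Real.cos θ) * Real.cos ((((j:ℤ) - (k:ℤ) : ℤ):ℝ) * θ) * (x j * x k) := by
    intro j
    rw [← Finset.mul_sum, intervalIntegral.integral_finset_sum]
    intro k _; exact hInt j k
  have step3 := Finset.sum_congr rfl (fun j (_ : j ∈ (Finset.univ : Finset (Fin m))) => step2 j)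
  refine step3.trans ?_
  rw [← Finset.mul_sum]
  congr 1
  have swap := intervalIntegral.integral_finset_sum (μ := volume) (a := (0:ℝ))
    (b := 2*Real.pi) (s := Finset.univ)
    (f := fun (j : Fin m) (θ : ℝ) => ∑ k : Fin m,
      Real.exp (2*t*Real.cos θ) * Real.cos ((((j:ℤ) - (k:ℤ) : ℤ):ℝ) * θ) * (x j * x k))
    (fun j _ => by
      apply Continuous.intervalIntegrable
      apply continuous_finset_sum
      intro k _
      fun_prop)
  rw [← swap]
  apply intervalIntegral.integral_congr
  intro θ _
  have key : ∀ j k : Fin m, ((((j:ℤ) - (k:ℤ) : ℤ)):ℝ) * θ = (j:ℝ)*θ - (k:ℝ)*θ := by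
    intro j k; push_cast; ring
  simp only [key, Real.cos_sub]
  have expand : ∀ a b : Fin m → ℝ,
      (∑ j, a j * b j)^2 = ∑ j : Fin m, ∑ k : Fin m, (a j * b j) * (a k * b k) := by
    intro a b
    rw [sq, Finset.sum_mul_sum]
  rw [expand x (fun j => Real.cos ((j:ℝ)*θ)), expand x (fun j => Real.sin ((j:ℝ)*θ))]
  rw [mul_add, Finset.mul_sum, Finset.mul_sum, ← Finset.sum_add_distrib]
  apply Finset.sum_congr rfl; intro j _
  rw [Finset.mul_sum, Finset.mul_sum, ← Finset.sum_add_distrib]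
  apply Finset.sum_congr rfl; intro k _
  ring

lemma Tmat_posDef (m : ℕ) (t : ℝ) : (Tmat m t).PosDef := by
  refine Matrix.posDef_iff_dotProduct_mulVec.mpr ⟨?_, ?_⟩
  · have h2 : (Tmat m t)ᴴ = (Tmat m t)ᵀ := by
      ext i j; simp [Matrix.conjTranspose_apply]
    rw [Matrix.IsHermitian, h2, Tmat_transpose]
  · intro x hx
    have hsx : star x = x := by funext i; simp
    rw [hsx, quad_form]
    set C : ℝ → ℝ := fun θ => ∑ j : Fin m, x j * Real.cos ((j:ℝ) * θ) with hCdef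
    set S : ℝ → ℝ := fun θ => ∑ j : Fin m, x j * Real.sin ((j:ℝ) * θ) with hSdef
    set g : ℝ → ℝ := fun θ => Real.exp (2*t*Real.cos θ) * ((C θ)^2 + (S θ)^2) with hgdef
    have hC : Continuous C := continuous_finset_sum _ (fun j _ => by fun_prop)
    have hS : Continuous S := continuous_finset_sum _ (fun j _ => by fun_prop)
    have hgc : Continuous g := by
      apply Continuous.mul
      · fun_prop
      · exact ((hC.pow 2).add (hS.pow 2))
    have hnn : ∀ θ, 0 ≤ g θ := by
      intro θ
      apply mul_nonneg (Real.exp_pos _).le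
      positivity
    have hx0 : ∃ θ0 ∈ Set.Ioo (0:ℝ) (2*Real.pi), 0 < g θ0 := by
      by_contra hcon
      push_neg at hcon
      have hzero : ∀ θ ∈ Set.Ioo (0:ℝ) (2*Real.pi), C θ = 0 ∧ S θ = 0 := by
        intro θ hθ
        have h1 : g θ = 0 := le_antisymm (hcon θ hθ) (hnn θ)
        have hE := Real.exp_pos (2*t*Real.cos θ)
        have h2 : (C θ)^2 + (S θ)^2 = 0 := by
          rcases mul_eq_zero.1 h1 with h | h
          · exact absurd h hE.ne'
          · exact h
        constructor <;> nlinarith [sq_nonneg (C θ), sq_nonneg (S θ)]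
      set P : Polynomial ℂ := ∑ j : Fin m, Polynomial.C (x j : ℂ) * Polynomial.X ^ (j:ℕ) with hPdef
      have hroot : ∀ θ ∈ Set.Ioo (0:ℝ) (2*Real.pi), P.IsRoot (Complex.exp (θ * Complex.I)) := by
        intro θ hθ
        obtain ⟨hC0, hS0⟩ := hzero θ hθ
        rw [Polynomial.IsRoot, hPdef]
        rw [Polynomial.eval_finset_sum]
        simp only [Polynomial.eval_mul, Polynomial.eval_C, Polynomial.eval_pow,
          Polynomial.eval_X]
        have cast1 : ∀ j : Fin m, (x j : ℂ) * (Complex.exp (θ * Complex.I) ^ (j:ℕ))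
            = ((x j * Real.cos ((j:ℝ)*θ) : ℝ) : ℂ)
              + ((x j * Real.sin ((j:ℝ)*θ) : ℝ) : ℂ) * Complex.I := by
          intro j
          rw [← Complex.exp_nat_mul]
          have harg : ((j:ℕ):ℂ) * (θ * Complex.I) = (((j:ℝ) * θ : ℝ) : ℂ) * Complex.I := by
            push_cast; ring
          rw [harg, Complex.exp_mul_I, ← Complex.ofReal_cos, ← Complex.ofReal_sin]
          push_cast
          ring
        rw [Finset.sum_congr rfl (fun j _ => cast1 j), Finset.sum_add_distrib,
          ← Finset.sum_mul, ← Complex.ofReal_sum, ← Complex.ofReal_sum]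
        have hC0' : (∑ j : Fin m, x j * Real.cos ((j:ℝ)*θ)) = 0 := hC0
        have hS0' : (∑ j : Fin m, x j * Real.sin ((j:ℝ)*θ)) = 0 := hS0
        rw [hC0', hS0']
        norm_num
      have hinf : {z : ℂ | P.IsRoot z}.Infinite := by
        apply Set.Infinite.mono (s := (fun θ:ℝ => Complex.exp (θ * Complex.I)) '' Set.Ioo 0 (2*Real.pi))
        · intro z hz
          obtain ⟨θ, hθ, rfl⟩ := hz
          exact hroot θ hθ
        · apply Set.Infinite.image
          · intro a ha b hb hab
            rw [Complex.exp_eq_exp_iff_exists_int] at hab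
            obtain ⟨n, hn⟩ := hab
            have h1 : (a : ℂ) = (b : ℂ) + n * (2*Real.pi) := by
              apply mul_right_cancel₀ Complex.I_ne_zero
              linear_combination hn
            have h2 : a = b + n * (2*Real.pi) := by exact_mod_cast h1
            have hn0 : n = 0 := by
              simp only [Set.mem_Ioo] at ha hb
              have hpi := Real.pi_pos
              by_contra hne
              rcases lt_or_gt_of_ne hne with h | h
              · have : (n:ℝ) ≤ -1 := by exact_mod_cast (by omega : n ≤ -1)
                nlinarith
              · have : (1:ℝ) ≤ n := by exact_mod_cast h
                nlinarith
            rw [hn0] at h2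
            simpa using h2
          · exact Set.Ioo_infinite (by have := Real.pi_pos; linarith)
      have hP0 : P = 0 := Polynomial.eq_zero_of_infinite_isRoot P hinf
      apply hx
      funext j0
      have hc := congrArg (fun q => Polynomial.coeff q (j0:ℕ)) hP0
      rw [hPdef] at hc
      simp only [Polynomial.finset_sum_coeff, Polynomial.coeff_C_mul,
        Polynomial.coeff_X_pow, Polynomial.coeff_zero, mul_ite, mul_one, mul_zero] at hc
      rw [Finset.sum_eq_single j0 (fun b _ hb => by
          rw [if_neg]; exact fun h => hb (Fin.ext h.symm))
        (fun h => absurd (Finset.mem_univ j0) h)] at hc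
      rw [if_pos rfl] at hc
      exact_mod_cast hc
    obtain ⟨θ0, hθ0mem, hθ0pos⟩ := hx0
    obtain ⟨hθ0l, hθ0r⟩ := hθ0mem
    have hopen : IsOpen {θ : ℝ | 0 < g θ} := isOpen_lt continuous_const hgc
    obtain ⟨ε, hε, hball⟩ := Metric.isOpen_iff.1 hopen θ0 hθ0pos
    set a := max 0 (θ0 - ε/2) with hadef
    set b := min (2*Real.pi) (θ0 + ε/2) with hbdef
    have haθ : a < θ0 := by
      apply max_lt hθ0l; linarith
    have hθb : θ0 < b := by
      apply lt_min hθ0r; linarith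
    have h0a : (0:ℝ) ≤ a := le_max_left _ _
    have hb2 : b ≤ 2*Real.pi := min_le_left _ _
    have hsub : ∀ θ ∈ Set.Ioo a b, 0 < g θ := by
      intro θ hθ
      apply hball
      rw [Metric.mem_ball, Real.dist_eq, abs_lt]
      have h1 : θ0 - ε/2 ≤ a := le_max_right _ _
      have h2 : b ≤ θ0 + ε/2 := min_le_right _ _
      obtain ⟨hθ1, hθ2⟩ := hθ
      constructor <;> linarith
    have hgi : ∀ u v : ℝ, IntervalIntegrable g volume u v := fun u v =>
      hgc.intervalIntegrable u v
    have split1 : ∫ θ in (0:ℝ)..(2*Real.pi), g θ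
        = (∫ θ in (0:ℝ)..a, g θ) + ((∫ θ in a..b, g θ) + ∫ θ in b..(2*Real.pi), g θ) := by
      rw [intervalIntegral.integral_add_adjacent_intervals (hgi a b) (hgi b _),
        intervalIntegral.integral_add_adjacent_intervals (hgi 0 a) (hgi a _)]
    have hpos2 : 0 < ∫ θ in a..b, g θ :=
      intervalIntegral.intervalIntegral_pos_of_pos_on (hgi a b) hsub (lt_trans haθ hθb)
    have hnn1 : 0 ≤ ∫ θ in (0:ℝ)..a, g θ :=
      intervalIntegral.integral_nonneg h0a (fun u _ => hnn u)
    have hnn3 : 0 ≤ ∫ θ in b..(2*Real.pi), g θ :=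
      intervalIntegral.integral_nonneg hb2 (fun u _ => hnn u)
    have hπ := Real.pi_pos
    have : 0 < ∫ θ in (0:ℝ)..(2*Real.pi), g θ := by
      rw [split1]; linarith
    positivity

lemma Dn_pos (m : ℕ) (t : ℝ) : 0 < Dn m t := (Tmat_posDef m t).det_pos

lemma Dn_ne (m : ℕ) (t : ℝ) : Dn m t ≠ 0 := (Dn_pos m t).ne'

lemma Tmat_det_isUnit (m : ℕ) (t : ℝ) : IsUnit (Tmat m t).det :=
  isUnit_iff_ne_zero.2 (Dn_ne m t)

lemma Tmat_mul_inv (m : ℕ) (t : ℝ) : Tmat m t * (Tmat m t)⁻¹ = 1 :=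
  Matrix.mul_nonsing_inv _ (Tmat_det_isUnit m t)

lemma Tmat_inv_mul (m : ℕ) (t : ℝ) : (Tmat m t)⁻¹ * Tmat m t = 1 :=
  Matrix.nonsing_inv_mul _ (Tmat_det_isUnit m t)

lemma Tmat_inv_transpose (m : ℕ) (t : ℝ) : ((Tmat m t)⁻¹)ᵀ = (Tmat m t)⁻¹ := by
  rw [Matrix.transpose_nonsing_inv, Tmat_transpose]

lemma Tmat_inv_symm (m : ℕ) (t : ℝ) (i j : Fin m) :
    (Tmat m t)⁻¹ i j = (Tmat m t)⁻¹ j i := by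
  conv_lhs => rw [← Tmat_inv_transpose]
  exact Matrix.transpose_apply _ i j

lemma Tmat_rev' (m : ℕ) (t : ℝ) :
    (Tmat m t).submatrix ⇑(Fin.revPerm) ⇑(Fin.revPerm) = Tmat m t := by
  ext i j
  simpa using Tmat_rev m t i j

lemma Tmat_inv_rev (m : ℕ) (t : ℝ) (i j : Fin m) :
    (Tmat m t)⁻¹ (Fin.rev i) (Fin.rev j) = (Tmat m t)⁻¹ i j := by
  have h0 : ((Tmat m t)⁻¹).submatrix ⇑(Fin.revPerm) ⇑(Fin.revPerm)
      * (Tmat m t).submatrix ⇑(Fin.revPerm) ⇑(Fin.revPerm) = 1 := by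
    rw [Matrix.submatrix_mul_equiv, Tmat_inv_mul, Matrix.submatrix_one_equiv]
  have h : ((Tmat m t)⁻¹).submatrix ⇑(Fin.revPerm) ⇑(Fin.revPerm) * Tmat m t = 1 := by
    rwa [Tmat_rev' m t] at h0
  have h2 := Matrix.inv_eq_left_inv h
  conv_rhs => rw [h2]
  simp

lemma rev_quad (m : ℕ) (t : ℝ) (a : Fin m → ℝ) :
    dotProduct (fun i => a (Fin.rev i)) ((Tmat m t)⁻¹ *ᵥ (fun i => a (Fin.rev i)))
      = dotProduct a ((Tmat m t)⁻¹ *ᵥ a) := by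
  have h1 : ∀ i, ((Tmat m t)⁻¹ *ᵥ (fun i => a (Fin.rev i))) i
      = ((Tmat m t)⁻¹ *ᵥ a) (Fin.rev i) := by
    intro i
    simp only [Matrix.mulVec, dotProduct]
    apply Fintype.sum_equiv Fin.revPerm
    intro j
    simp only [Fin.revPerm_apply]
    rw [← Tmat_inv_rev m t i j]
  unfold dotProduct
  rw [Fintype.sum_equiv Fin.revPerm _ (fun i => a i * ((Tmat m t)⁻¹ *ᵥ a) i)
    (fun i => by simp [h1 i])]

lemma detBorder (p : ℕ) (t : ℝ) :
    Dn (p+1) t = Dn p t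
      * (fk t 0 - dotProduct (fminus p t) ((Tmat p t)⁻¹ *ᵥ fminus p t)) := by
  classical
  have hdet : Dn (p+1) t
      = ((Tmat (p+1) t).submatrix (⇑(finSumFinEquiv (m := p) (n := 1)))
          (⇑(finSumFinEquiv (m := p) (n := 1)))).det := by
    rw [Matrix.det_submatrix_equiv_self]
    rfl
  set B := Tmat p t with hB
  set c : Matrix (Fin p) (Fin 1) ℝ := fun i _ => fminus p t i with hc
  set r : Matrix (Fin 1) (Fin p) ℝ := fun _ j => fminus p t j with hr
  set d : Matrix (Fin 1) (Fin 1) ℝ := fun _ _ => fk t 0 with hd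
  have hblock : (Tmat (p+1) t).submatrix (⇑(finSumFinEquiv (m := p) (n := 1)))
      (⇑(finSumFinEquiv (m := p) (n := 1))) = Matrix.fromBlocks B c r d := by
    ext i j
    cases i with
    | inl i =>
      cases j with
      | inl j =>
        simp only [Matrix.submatrix_apply, finSumFinEquiv_apply_left,
          Matrix.fromBlocks_apply₁₁, Tmat, hB]
        congr 1
      | inr j =>
        simp only [Matrix.submatrix_apply, finSumFinEquiv_apply_left,
          finSumFinEquiv_apply_right, Matrix.fromBlocks_apply₁₂, Tmat, hc, fminus]
        show fk t _ = fk t ((p:ℤ) - ((i:ℕ):ℤ))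
        rw [← fk_neg t ((p:ℤ) - (i:ℤ))]
        congr 1
        simp only [Fin.coe_castAdd, Fin.coe_natAdd]
        have hj := j.isLt
        push_cast
        omega
    | inr i =>
      cases j with
      | inl j =>
        simp only [Matrix.submatrix_apply, finSumFinEquiv_apply_left,
          finSumFinEquiv_apply_right, Matrix.fromBlocks_apply₂₁, Tmat, hr, fminus]
        congr 1
        simp only [Fin.coe_castAdd, Fin.coe_natAdd]
        have hi := i.isLt
        push_cast
        omega
      | inr j =>
        simp only [Matrix.submatrix_apply, finSumFinEquiv_apply_right,
          Matrix.fromBlocks_apply₂₂, Tmat, hd]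
        congr 1
        simp only [Fin.coe_natAdd]
        have hi := i.isLt
        have hj := j.isLt
        push_cast
        omega
  haveI : Invertible B := (Tmat p t).invertibleOfIsUnitDet (Tmat_det_isUnit p t)
  rw [hdet, hblock, Matrix.det_fromBlocks₁₁]
  have hinv : (⅟B : Matrix (Fin p) (Fin p) ℝ) = B⁻¹ := invOf_eq_nonsing_inv B
  congr 1
  rw [Matrix.det_fin_one]
  have : (r * ⅟B * c) 0 0 = dotProduct (fminus p t) (B⁻¹ *ᵥ fminus p t) := by
    rw [hinv]
    simp only [Matrix.mul_apply]
    simp only [Matrix.mul_apply, dotProduct, Matrix.mulVec, Finset.sum_mul,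
      Finset.mul_sum, hr, hc]
    rw [Finset.sum_comm]
    exact Finset.sum_congr rfl (fun i _ => Finset.sum_congr rfl (fun j _ => by ring))
  rw [Matrix.sub_apply, this]

lemma dot_inv_symm (m : ℕ) (t : ℝ) (a b : Fin m → ℝ) :
    dotProduct a ((Tmat m t)⁻¹ *ᵥ b) = dotProduct b ((Tmat m t)⁻¹ *ᵥ a) := by
  simp only [dotProduct, Matrix.mulVec, Finset.mul_sum]
  rw [Finset.sum_comm]
  exact Finset.sum_congr rfl (fun i _ => Finset.sum_congr rfl (fun j _ => by
    rw [Tmat_inv_symm m t j i]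
    ring))

/-- D_{n+1}(t)·D_{n−1}(t)/D_n(t)² = 1 − U_n(t)². -/
theorem Dn_ratio_eq_one_sub_Un_sq (n : ℕ) (hn : 1 ≤ n) (t : ℝ) :
    Dn (n + 1) t * Dn (n - 1) t / (Dn n t) ^ 2 = 1 - (Un n t) ^ 2 := by
  obtain ⟨m, rfl⟩ : ∃ m, n = m + 1 := ⟨n - 1, by omega⟩
  set x := (Tmat (m+1) t)⁻¹ *ᵥ fplus (m+1) t with hx
  set u := x (Fin.last m) with hu
  have hUn : Un (m+1) t = u := by
    rw [Un, ← hx, dotProduct, Fin.sum_univ_castSucc]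
    have h1 : ∀ i : Fin m, deltaMinus (m+1) i.castSucc = 0 := by
      intro i
      simp only [deltaMinus, Fin.coe_castSucc, Nat.add_sub_cancel]
      exact if_neg (Fin.is_lt i).ne
    have h2 : deltaMinus (m+1) (Fin.last m) = 1 := by
      simp [deltaMinus]
    simp [h1, h2]
    exact hu.symm
  have hTx : Tmat (m+1) t *ᵥ x = fplus (m+1) t := by
    rw [hx, Matrix.mulVec_mulVec, Tmat_mul_inv, Matrix.one_mulVec]
  set y : Fin m → ℝ := fun j => x j.castSucc with hy
  set gp := fplus m t with hgp
  set kv := fminus m t with hkv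
  set z := (Tmat m t)⁻¹ *ᵥ gp with hz
  set w := (Tmat m t)⁻¹ *ᵥ kv with hw
  set s := fk t 0 - dotProduct kv w with hs
  have e1 : ∀ j i : Fin m, Tmat (m+1) t j.castSucc i.castSucc = Tmat m t j i := by
    intro j i
    simp only [Tmat, Fin.coe_castSucc]
  have e2 : ∀ j : Fin m, Tmat (m+1) t j.castSucc (Fin.last m) = kv j := by
    intro j
    simp only [Tmat, hkv, fminus, Fin.coe_castSucc, Fin.val_last]
    rw [← fk_neg t ((m:ℤ) - (j:ℤ))]
    congr 1
    ring
  have e2' : ∀ i : Fin m, Tmat (m+1) t (Fin.last m) i.castSucc = kv i := by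
    intro i
    simp only [Tmat, hkv, fminus, Fin.coe_castSucc, Fin.val_last]
  have e3 : ∀ j : Fin m, fplus (m+1) t j.castSucc = gp j := by
    intro j
    simp only [fplus, hgp, Fin.coe_castSucc]
  have e4 : Tmat (m+1) t (Fin.last m) (Fin.last m) = fk t 0 := by
    simp only [Tmat, Fin.val_last]
    congr 1
    ring
  have e5 : fplus (m+1) t (Fin.last m) = fk t ((m:ℤ)+1) := by
    simp only [fplus, Fin.val_last]
  have hrow : ∀ j : Fin m, (Tmat m t *ᵥ y) j + u * kv j = gp j := by
    intro j
    have h := congrFun hTx j.castSucc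
    rw [Matrix.mulVec, dotProduct, Fin.sum_univ_castSucc] at h
    simp only [e1, e2, e3] at h
    rw [Matrix.mulVec, dotProduct]
    rw [← h, hu, hy]
    ring
  have hlast : dotProduct kv y + fk t 0 * u = fk t ((m:ℤ)+1) := by
    have h := congrFun hTx (Fin.last m)
    rw [Matrix.mulVec, dotProduct, Fin.sum_univ_castSucc] at h
    simp only [e2', e4, e5] at h
    rw [dotProduct, ← h, hu, hy]
  have hy_eq : y = z - u • w := by
    have hTy : Tmat m t *ᵥ y = gp - u • kv := by
      funext j
      have := hrow j
      simp only [Pi.sub_apply, Pi.smul_apply, smul_eq_mul]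
      linarith
    have hid : (Tmat m t)⁻¹ *ᵥ (Tmat m t *ᵥ y) = y := by
      rw [Matrix.mulVec_mulVec, Tmat_inv_mul, Matrix.one_mulVec]
    rw [← hid, hTy, Matrix.mulVec_sub, Matrix.mulVec_smul, hz, hw]
  have hkz_gw : dotProduct kv z = dotProduct gp w := by
    rw [hz, hw]
    exact dot_inv_symm m t kv gp
  have hrevk : kv = fun i => gp (Fin.rev i) := by
    funext i
    simp only [hkv, hgp, fminus, fplus, Fin.val_rev]
    congr 1
    have := i.is_lt
    push_cast
    omega
  have hkw_gz : dotProduct kv w = dotProduct gp z := by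
    rw [hw, hkv] at *
    rw [hz]
    calc dotProduct kv ((Tmat m t)⁻¹ *ᵥ kv)
        = dotProduct (fun i => gp (Fin.rev i)) ((Tmat m t)⁻¹ *ᵥ (fun i => gp (Fin.rev i))) := by
          rw [← hrevk]
      _ = dotProduct gp ((Tmat m t)⁻¹ *ᵥ gp) := rev_quad m t gp
  have hdky : dotProduct kv y = dotProduct kv z - u * dotProduct kv w := by
    rw [hy_eq, dotProduct_sub, dotProduct_smul]
    simp [smul_eq_mul]
  have hus : u * s = fk t ((m:ℤ)+1) - dotProduct kv z := by
    rw [hs]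
    linear_combination hlast - hdky
  have h1 : dotProduct (fplus (m+1) t) x = dotProduct gp y + fk t ((m:ℤ)+1) * u := by
    rw [dotProduct, Fin.sum_univ_castSucc, e5, dotProduct]
    simp only [e3, hy, hu]
  have h2 : dotProduct gp y = dotProduct gp z - u * dotProduct kv z := by
    rw [hy_eq, dotProduct_sub, dotProduct_smul, hkz_gw]
    simp [smul_eq_mul]
  have hfx : dotProduct (fplus (m+1) t) x = dotProduct gp z + s * u^2 := by
    rw [h1, h2]
    linear_combination (-u) * hus
  have hbig : dotProduct (fminus (m+1) t) ((Tmat (m+1) t)⁻¹ *ᵥ fminus (m+1) t)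
      = dotProduct (fplus (m+1) t) x := by
    have hrevf : fminus (m+1) t = fun i => fplus (m+1) t (Fin.rev i) := by
      funext i
      simp only [fminus, fplus, Fin.val_rev]
      congr 1
      have := i.is_lt
      push_cast
      omega
    rw [hx, hrevf]
    exact rev_quad (m+1) t (fplus (m+1) t)
  have hb1 : Dn (m+1+1) t = Dn (m+1) t * (fk t 0 - dotProduct (fplus (m+1) t) x) := by
    rw [detBorder (m+1) t, hbig]
  have hb2 : Dn (m+1) t = Dn m t * s := by
    rw [detBorder m t, hs, hw, hkv]
  have hs2 : s = fk t 0 - dotProduct gp z := by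
    rw [hs, hkw_gz]
  have hkey : Dn (m+1+1) t = Dn (m+1) t * (s * (1 - u^2)) := by
    rw [hb1, hfx]
    linear_combination (-(Dn (m+1) t)) * hs2
  have hDm := Dn_ne m t
  have hDm1 := Dn_ne (m+1) t
  have hsne : s ≠ 0 := by
    intro h
    rw [hb2, h, mul_zero] at hDm1
    exact hDm1 rfl
  rw [show m + 1 - 1 = m from rfl, hUn, hkey, hb2]
  field_simp
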